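/- arXiv:1204.1940 — 2 statements merged into one kernel-verified Lean document; each statement's English description precedes it below -/
import Mathlib

section
/- Let H be a finite-dimensional complex Hilbert space, let M_1, …, M_r be subspaces of H, and let T = P_{M_1} P_{M_2} ⋯ P_{M_r}. Then ‖T‖ = 1 if and only if M_1 ∩ ⋯ ∩ M_r ≠ {0}. -/
/-- The orthogonal projection onto a subspace `K` of a complex inner product space,
as a bounded operator on the whole space (junk value `0` if `K` does not admit an
orthogonal projection; for a closed subspace of a Hilbert space it is the genuine
orthogonal projection). -/
noncomputable def proj {H : Type*} [NormedAddCommGroup H] [InnerProductSpace ℂ H]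
    (K : Submodule ℂ H) : H →L[ℂ] H :=
  letI := Classical.propDecidable (Submodule.HasOrthogonalProjection K)
  if h : Submodule.HasOrthogonalProjection K then
    haveI := h
    K.subtypeL.comp (Submodule.orthogonalProjectionOnto K)
  else 0

section aux
variable {H : Type*} [NormedAddCommGroup H] [InnerProductSpace ℂ H] [FiniteDimensional ℂ H]

lemma proj_eq (K : Submodule ℂ H) :
    proj K = K.subtypeL.comp (Submodule.orthogonalProjectionOnto K) := by
  simp [proj, dif_pos]

lemma proj_apply (K : Submodule ℂ H) (x : H) :
    proj K x = (Submodule.orthogonalProjectionOnto K x : H) := by rw [proj_eq]; rfl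

lemma norm_proj_apply_le (K : Submodule ℂ H) (x : H) : ‖proj K x‖ ≤ ‖x‖ := by
  rw [proj_apply]
  have h : ‖x‖ ^ 2 = ‖(Submodule.orthogonalProjectionOnto K x : H)‖ ^ 2
      + ‖(Submodule.orthogonalProjectionOnto Kᗮ x : H)‖ ^ 2 := Submodule.norm_sq_eq_add_norm_sq_projection x K
  nlinarith [norm_nonneg ((Submodule.orthogonalProjectionOnto K x : H)), norm_nonneg x,
    sq_nonneg ‖(Submodule.orthogonalProjectionOnto Kᗮ x : H)‖]

lemma proj_apply_of_mem (K : Submodule ℂ H) {x : H} (hx : x ∈ K) : proj K x = x := by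
  rw [proj_apply]
  exact Submodule.starProjection_eq_self_iff.mpr hx

lemma mem_of_norm_proj_eq (K : Submodule ℂ H) {x : H} (h : ‖proj K x‖ = ‖x‖) : x ∈ K := by
  rw [proj_apply] at h
  have h2 : ‖x‖ ^ 2 = ‖(Submodule.orthogonalProjectionOnto K x : H)‖ ^ 2
      + ‖(Submodule.orthogonalProjectionOnto Kᗮ x : H)‖ ^ 2 := Submodule.norm_sq_eq_add_norm_sq_projection x K
  have h' : ‖(Submodule.orthogonalProjectionOnto K x : H)‖ ^ 2 = ‖x‖ ^ 2 := by rw [h]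
  have h3' : ‖(Submodule.orthogonalProjectionOnto Kᗮ x : H)‖ ^ 2 = 0 := by linarith
  have h3 : ‖(Submodule.orthogonalProjectionOnto Kᗮ x : H)‖ = 0 := by
    have := sq_eq_zero_iff.mp h3'
    exact this
  have h4 : (Submodule.orthogonalProjectionOnto Kᗮ x : H) = 0 := norm_eq_zero.mp h3
  have h5 := Submodule.starProjection_add_starProjection_orthogonal (K := K) x
  change (Submodule.orthogonalProjectionOnto K x : H) + (Submodule.orthogonalProjectionOnto Kᗮ x : H) = x at h5
  rw [h4, add_zero] at h5
  rw [← h5]; exact (Submodule.orthogonalProjectionOnto K x).2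

lemma norm_prodList_apply_le (l : List (Submodule ℂ H)) (x : H) :
    ‖(l.map proj).prod x‖ ≤ ‖x‖ := by
  induction l with
  | nil => simp
  | cons K l ih =>
      simp only [List.map_cons, List.prod_cons, ContinuousLinearMap.mul_apply]
      exact (norm_proj_apply_le K _).trans ih

lemma prodList_apply_of_mem (l : List (Submodule ℂ H)) {x : H} (hx : ∀ K ∈ l, x ∈ K) :
    (l.map proj).prod x = x := by
  induction l with
  | nil => simp
  | cons K l ih =>
      simp only [List.map_cons, List.prod_cons, ContinuousLinearMap.mul_apply]
      rw [ih (fun K hK => hx K (List.mem_cons_of_mem _ hK))]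
      exact proj_apply_of_mem K (hx K (List.mem_cons_self))

lemma mem_of_norm_prodList_eq (l : List (Submodule ℂ H)) {x : H}
    (h : ‖(l.map proj).prod x‖ = ‖x‖) : ∀ K ∈ l, x ∈ K := by
  induction l with
  | nil => simp
  | cons K l ih =>
      simp only [List.map_cons, List.prod_cons, ContinuousLinearMap.mul_apply] at h
      have h1 : ‖(l.map proj).prod x‖ = ‖x‖ := by
        have := norm_proj_apply_le K ((l.map proj).prod x)
        have := norm_prodList_apply_le l x
        linarith [le_of_eq h.symm]
      have hmem := ih h1
      have hfix : (l.map proj).prod x = x := prodList_apply_of_mem l hmem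
      rw [hfix] at h
      intro K' hK'
      rcases List.mem_cons.mp hK' with rfl | hK'
      · exact mem_of_norm_proj_eq _ h
      · exact hmem K' hK'

/-- Norm attainment in finite dimensions. -/
lemma exists_norm_apply_eq (T : H →L[ℂ] H) (hT : T ≠ 0) :
    ∃ x : H, ‖x‖ = 1 ∧ ‖T x‖ = ‖T‖ := by
  obtain ⟨y, hy⟩ : ∃ y : H, T y ≠ 0 := by
    by_contra h
    push_neg at h
    exact hT (ContinuousLinearMap.ext fun y => by rw [h y]; rfl)
  have hy0 : y ≠ 0 := fun h => hy (by rw [h, map_zero])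
  have hsne : (Metric.sphere (0 : H) 1).Nonempty := ⟨‖y‖⁻¹ • y, by
    simp [norm_smul, norm_inv, inv_mul_cancel₀ (norm_ne_zero_iff.mpr hy0)]⟩
  obtain ⟨x, hx, hmax⟩ := (isCompact_sphere (0 : H) 1).exists_isMaxOn hsne
    ((T.continuous.norm).continuousOn)
  rw [mem_sphere_zero_iff_norm] at hx
  have hub : ‖T x‖ ≤ ‖T‖ := by
    have := T.le_opNorm x
    rw [hx, mul_one] at this
    exact this
  refine ⟨x, hx, le_antisymm hub ?_⟩
  apply T.opNorm_le_bound (norm_nonneg _)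
  intro z
  rcases eq_or_ne z 0 with rfl | hz
  · simp
  · have hz' : ‖z‖⁻¹ • z ∈ Metric.sphere (0 : H) 1 := by
      simp [norm_smul, norm_inv, inv_mul_cancel₀ (norm_ne_zero_iff.mpr hz)]
    have this' : ‖z‖⁻¹ * ‖T z‖ ≤ ‖T x‖ := by
      simpa [norm_smul] using hmax hz'
    have hzpos : (0:ℝ) < ‖z‖ := norm_pos_iff.mpr hz
    calc ‖T z‖ = ‖z‖ * (‖z‖⁻¹ * ‖T z‖) := by field_simp
    _ ≤ ‖z‖ * ‖T x‖ := mul_le_mul_of_nonneg_left this' hzpos.le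
    _ = ‖T x‖ * ‖z‖ := mul_comm _ _

end aux

theorem stmt5 {H : Type*} [NormedAddCommGroup H] [InnerProductSpace ℂ H]
    [FiniteDimensional ℂ H] {r : ℕ} (M : Fin r → Submodule ℂ H) :
    ‖(List.ofFn fun i => proj (M i)).prod‖ = 1 ↔ (⨅ i, M i) ≠ ⊥ := by
  have hofn : (List.ofFn fun i => proj (M i)) = (List.ofFn M).map proj := by
    rw [List.map_ofFn]; rfl
  set T := (List.ofFn fun i => proj (M i)).prod with hT
  constructor
  · intro h
    have hTne : T ≠ 0 := by
      intro h0; rw [h0, norm_zero] at h; norm_num at h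
    obtain ⟨x, hx1, hxT⟩ := exists_norm_apply_eq T hTne
    rw [h, ← hx1] at hxT
    rw [hT, hofn] at hxT
    have hmem := mem_of_norm_prodList_eq (List.ofFn M) hxT
    intro hbot
    have hx0 : x ≠ 0 := by intro h0; rw [h0, norm_zero] at hx1; norm_num at hx1
    apply hx0
    have : x ∈ ⨅ i, M i := by
      rw [Submodule.mem_iInf]
      intro i
      exact hmem (M i) (List.mem_ofFn.mpr ⟨i, rfl⟩)
    rw [hbot] at this
    simpa using this
  · intro hne
    obtain ⟨x, hx, hx0⟩ := Submodule.exists_mem_ne_zero_of_ne_bot hne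
    have hmem : ∀ K ∈ List.ofFn M, x ∈ K := by
      intro K hK
      obtain ⟨i, rfl⟩ := List.mem_ofFn.mp hK
      exact Submodule.mem_iInf _ |>.mp hx i
    have hfix : T x = x := by rw [hT, hofn]; exact prodList_apply_of_mem _ hmem
    apply le_antisymm
    · apply ContinuousLinearMap.opNorm_le_bound _ zero_le_one
      intro z
      rw [one_mul, hT, hofn]
      exact norm_prodList_apply_le _ z
    · have := T.le_opNorm x
      rw [hfix] at this
      have hxpos : (0:ℝ) < ‖x‖ := norm_pos_iff.mpr hx0
      exact le_of_mul_le_mul_right (by linarith) hxpos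
end

section
/- Let H be a complex Hilbert space and let M and N be closed subspaces of H. Then the algebraic sum M + N is closed in H if and only if c_e(M,N) < 1, i.e. if and only if the distance of P_M P_N − P_{M∩N} to the set of compact operators on H is strictly less than 1. -/
/-- The cosine of the essential Friedrichs angle between two (closed) subspaces `M`, `N`:
the infimum over compact operators `K` of `‖P_M P_N - P_{M ∩ N} + K‖`, i.e. the norm of
the class of `P_M P_N - P_{M ∩ N}` in the Calkin algebra. -/
noncomputable def essFriedrichs {H : Type*} [NormedAddCommGroup H] [InnerProductSpace ℂ H]
    (M N : Submodule ℂ H) : ℝ :=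
  ⨅ K : {T : H →L[ℂ] H // IsCompactOperator ⇑T},
    ‖proj M * proj N - proj (M ⊓ N) + (K : H →L[ℂ] H)‖

open scoped ComplexInnerProductSpace
open Filter

section Basic

variable {H : Type*} [NormedAddCommGroup H] [InnerProductSpace ℂ H]
variable (U : Submodule ℂ H) [Submodule.HasOrthogonalProjection U]

lemma proj_eq_s6 : proj U = U.subtypeL.comp (Submodule.orthogonalProjectionOnto U) := by
  unfold proj
  exact dif_pos ‹_›

lemma proj_apply_mem (x : H) : proj U x ∈ U := by
  rw [proj_eq_s6]; exact (Submodule.orthogonalProjectionOnto U x).2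

lemma proj_eq_self {x : H} (h : x ∈ U) : proj U x = x := by
  rw [proj_eq_s6]; exact Submodule.starProjection_eq_self_iff.2 h

lemma proj_eq_zero {x : H} (h : x ∈ Uᗮ) : proj U x = 0 := by
  rw [proj_eq_s6]
  show ((Submodule.orthogonalProjectionOnto U x : U) : H) = 0
  rw [Submodule.orthogonalProjectionOnto_eq_zero_iff.2 h]
  rfl

lemma sub_proj_mem_orth (x : H) : x - proj U x ∈ Uᗮ := by
  rw [proj_eq_s6]; exact Submodule.sub_starProjection_mem_orthogonal x

lemma norm_sq_proj (x : H) : ‖x‖ ^ 2 = ‖proj U x‖ ^ 2 + ‖x - proj U x‖ ^ 2 := by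
  have h := norm_add_sq_eq_norm_sq_add_norm_sq_of_inner_eq_zero (𝕜 := ℂ)
    (x - proj U x) (proj U x) ?_
  · have : x - proj U x + proj U x = x := by abel
    rw [this] at h
    linarith
  · exact (Submodule.mem_orthogonal' U _).1 (sub_proj_mem_orth U x) _ (proj_apply_mem U x)

lemma norm_proj_le (x : H) : ‖proj U x‖ ≤ ‖x‖ := by
  nlinarith [norm_sq_proj U x, norm_nonneg (x - proj U x), norm_nonneg (proj U x),
    norm_nonneg x]

lemma norm_sub_proj_le (x : H) : ‖x - proj U x‖ ≤ ‖x‖ := by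
  nlinarith [norm_sq_proj U x, norm_nonneg (x - proj U x), norm_nonneg (proj U x),
    norm_nonneg x]

lemma proj_eq_self_of_norm {x : H} (h : ‖proj U x‖ = ‖x‖) : proj U x = x := by
  have h' : ‖proj U x‖ ^ 2 = ‖x‖ ^ 2 := by rw [h]
  have h2 : ‖x - proj U x‖ ^ 2 = 0 := by nlinarith [norm_sq_proj U x]
  have h3 : x - proj U x = 0 := by
    rw [← norm_eq_zero]; nlinarith [norm_nonneg (x - proj U x)]
  rw [sub_eq_zero] at h3; exact h3.symm

lemma proj_eq_zero_of_norm {x : H} (h : ‖x - proj U x‖ = ‖x‖) : proj U x = 0 := by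
  have h' : ‖x - proj U x‖ ^ 2 = ‖x‖ ^ 2 := by rw [h]
  have h2 : ‖proj U x‖ ^ 2 = 0 := by nlinarith [norm_sq_proj U x]
  rw [← norm_eq_zero]; nlinarith [norm_nonneg (proj U x)]

lemma proj_min (x : H) {m : H} (hm : m ∈ U) : ‖x - proj U x‖ ≤ ‖x - m‖ := by
  have h : x - m = (x - proj U x) + (proj U x - m) := by abel
  have horth : ⟪x - proj U x, proj U x - m⟫ = 0 :=
    (Submodule.mem_orthogonal' U _).1 (sub_proj_mem_orth U x) _
      (Submodule.sub_mem U (proj_apply_mem U x) hm)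
  have h2 := norm_add_sq_eq_norm_sq_add_norm_sq_of_inner_eq_zero (𝕜 := ℂ)
    (x - proj U x) (proj U x - m) horth
  rw [← h] at h2
  nlinarith [norm_nonneg (x - m), norm_nonneg (x - proj U x), norm_nonneg (proj U x - m)]

lemma proj_inner (x y : H) : ⟪proj U x, y⟫ = ⟪x, proj U y⟫ := by
  rw [proj_eq_s6]
  exact Submodule.starProjection_isSymmetric (𝕜 := ℂ) (K := U) x y

end Basic
section TTop

variable {H : Type*} [NormedAddCommGroup H] [InnerProductSpace ℂ H]

noncomputable def TT (M N : Submodule ℂ H) : H →L[ℂ] H :=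
  proj M * proj N - proj (M ⊓ N)

variable (M N : Submodule ℂ H) [Submodule.HasOrthogonalProjection M] [Submodule.HasOrthogonalProjection N]
  [Submodule.HasOrthogonalProjection (M ⊓ N)]

lemma TT_apply (x : H) : TT M N x = proj M (proj N (x - proj (M ⊓ N) x)) := by
  have h1 : proj (M ⊓ N) x ∈ M ⊓ N := proj_apply_mem _ _
  have h2 : proj N (proj (M ⊓ N) x) = proj (M ⊓ N) x :=
    proj_eq_self _ (Submodule.mem_inf.1 h1).2
  have h3 : proj M (proj (M ⊓ N) x) = proj (M ⊓ N) x :=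
    proj_eq_self _ (Submodule.mem_inf.1 h1).1
  simp only [TT, ContinuousLinearMap.sub_apply, ContinuousLinearMap.mul_apply, map_sub, h2, h3]

lemma norm_TT_apply_le (x : H) : ‖TT M N x‖ ≤ ‖x‖ := by
  rw [TT_apply]
  exact (norm_proj_le _ _).trans ((norm_proj_le _ _).trans (norm_sub_proj_le _ _))

lemma norm_TT_le_one : ‖TT M N‖ ≤ 1 :=
  ContinuousLinearMap.opNorm_le_bound _ zero_le_one fun x => by
    simpa using norm_TT_apply_le M N x

lemma eq_zero_of_norm_TT_eq {x : H} (h : ‖TT M N x‖ = ‖x‖) : x = 0 := by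
  set y := x - proj (M ⊓ N) x with hy
  set z := proj N y with hz
  have hTx : TT M N x = proj M z := TT_apply M N x
  have c1 : ‖proj M z‖ ≤ ‖z‖ := norm_proj_le _ _
  have c2 : ‖z‖ ≤ ‖y‖ := norm_proj_le _ _
  have c3 : ‖y‖ ≤ ‖x‖ := norm_sub_proj_le _ _
  have hh : ‖proj M z‖ = ‖x‖ := by rw [← hTx, h]
  have e1 : ‖proj M z‖ = ‖z‖ := le_antisymm c1 (by linarith)
  have e2 : ‖z‖ = ‖y‖ := le_antisymm c2 (by linarith)
  have e3 : ‖y‖ = ‖x‖ := le_antisymm c3 (by linarith)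
  have hMz : proj M z = z := proj_eq_self_of_norm M e1
  have hNy : z = y := proj_eq_self_of_norm N e2
  have h0 : proj (M ⊓ N) x = 0 := proj_eq_zero_of_norm (M ⊓ N) e3
  have hyx : y = x := by rw [hy, h0, sub_zero]
  have hxN : x ∈ N := by rw [← hyx, ← hNy, hz]; exact proj_apply_mem _ _
  have hxM : x ∈ M := by
    have : proj M z ∈ M := proj_apply_mem _ _
    rwa [hMz, hNy, hyx] at this
  have : proj (M ⊓ N) x = x := proj_eq_self _ (Submodule.mem_inf.2 ⟨hxM, hxN⟩)
  rw [h0] at this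
  exact this.symm

end TTop
section Ess

open ContinuousLinearMap

variable {H : Type*} [NormedAddCommGroup H] [InnerProductSpace ℂ H] [CompleteSpace H]
variable (M N : Submodule ℂ H) [Submodule.HasOrthogonalProjection M] [Submodule.HasOrthogonalProjection N]
  [Submodule.HasOrthogonalProjection (M ⊓ N)]

lemma norm_TT_lt_one_of_ess (h : essFriedrichs M N < 1) : ‖TT M N‖ < 1 := by
  by_contra hlt
  push_neg at hlt
  have hT1 : ‖TT M N‖ = 1 := le_antisymm (norm_TT_le_one M N) hlt
  set T := TT M N with hTdef
  have hne : Nonempty {K : H →L[ℂ] H // IsCompactOperator ⇑K} := ⟨⟨0, isCompactOperator_zero⟩⟩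
  obtain ⟨⟨Kop, hKc⟩, hK⟩ := exists_lt_of_ciInf_lt h
  have hK' : ‖T + Kop‖ < 1 := hK
  -- an approximate-norming sequence
  have hseq : ∀ n : ℕ, ∃ v : H, ‖v‖ < 1 ∧ 1 - 1 / (n + 1) < ‖T v‖ := by
    intro n
    apply ContinuousLinearMap.exists_lt_apply_of_lt_opNorm
    rw [hT1]
    have : (0:ℝ) < 1 / (n+1) := by positivity
    linarith
  choose x hx1 hx2 using hseq
  have hx1' : ∀ n, ‖x n‖ ≤ 1 := fun n => (hx1 n).le
  have hTxle : ∀ n, ‖T (x n)‖ ≤ 1 := fun n => (norm_TT_apply_le M N (x n)).trans (hx1' n)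
  have hlow : Tendsto (fun n : ℕ => 1 - 1 / ((n:ℝ) + 1)) atTop (nhds 1) := by
    have h0 := tendsto_one_div_add_atTop_nhds_zero_nat (𝕜 := ℝ)
    have := (tendsto_const_nhds (x := (1:ℝ)) (f := (atTop : Filter ℕ))).sub h0
    simpa using this
  have hTx : Tendsto (fun n => ‖T (x n)‖) atTop (nhds 1) := by
    apply tendsto_of_tendsto_of_tendsto_of_le_of_le hlow tendsto_const_nhds
    · exact fun n => (hx2 n).le
    · exact hTxle
  set S : H →L[ℂ] H := ContinuousLinearMap.adjoint T ∘L T - 1 with hSdef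
  have hadj : ‖ContinuousLinearMap.adjoint T‖ = ‖T‖ := by
    exact LinearIsometryEquiv.norm_map ContinuousLinearMap.adjoint T
  have hSapp : ∀ v : H, S v = ContinuousLinearMap.adjoint T (T v) - v := fun v => rfl
  have hinner : ∀ v : H, ⟪ContinuousLinearMap.adjoint T (T v), v⟫ = ⟪T v, T v⟫ := fun v =>
    ContinuousLinearMap.adjoint_inner_left T v (T v)
  -- symmetry of S
  have hsym : ∀ a b : H, ⟪S a, b⟫ = ⟪a, S b⟫ := by
    intro a b
    have h1 : ⟪S a, b⟫ = ⟪T a, T b⟫ - ⟪a, b⟫ := by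
      rw [hSapp, inner_sub_left, ContinuousLinearMap.adjoint_inner_left]
    have h2 : ⟪a, S b⟫ = ⟪T a, T b⟫ - ⟪a, b⟫ := by
      rw [hSapp, inner_sub_right, ContinuousLinearMap.adjoint_inner_right]
    rw [h1, h2]
  -- S has trivial kernel
  have hker : ∀ v : H, S v = 0 → v = 0 := by
    intro v hv
    have hAv : ContinuousLinearMap.adjoint T (T v) = v := by
      have := hv
      rw [hSapp] at this
      rwa [sub_eq_zero] at this
    have h1 : ⟪T v, T v⟫ = ⟪v, v⟫ := by rw [← hinner v, hAv]
    have h2 : ‖T v‖ ^ 2 = ‖v‖ ^ 2 := by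
      have a1 := inner_self_eq_norm_sq (𝕜 := ℂ) (T v)
      have a2 := inner_self_eq_norm_sq (𝕜 := ℂ) v
      rw [← a1, ← a2, h1]
    have h3 : ‖T v‖ = ‖v‖ := by
      nlinarith [norm_nonneg (T v), norm_nonneg v]
    exact eq_zero_of_norm_TT_eq M N h3
  -- S (x n) tends to zero
  have hSx : Tendsto (fun n => ‖S (x n)‖) atTop (nhds 0) := by
    have hbound : ∀ n, ‖S (x n)‖ ^ 2 ≤ 2 - 2 * ‖T (x n)‖ ^ 2 := by
      intro n
      have e1 : ‖S (x n)‖ ^ 2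
          = ‖ContinuousLinearMap.adjoint T (T (x n))‖ ^ 2
            - 2 * Complex.re ⟪ContinuousLinearMap.adjoint T (T (x n)), x n⟫ + ‖x n‖ ^ 2 := by
        rw [hSapp]
        exact norm_sub_sq (𝕜 := ℂ) _ _
      have e2 : Complex.re ⟪ContinuousLinearMap.adjoint T (T (x n)), x n⟫ = ‖T (x n)‖ ^ 2 := by
        rw [hinner]
        exact inner_self_eq_norm_sq (𝕜 := ℂ) (T (x n))
      have e3 : ‖ContinuousLinearMap.adjoint T (T (x n))‖ ≤ 1 := by
        calc ‖ContinuousLinearMap.adjoint T (T (x n))‖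
            ≤ ‖ContinuousLinearMap.adjoint T‖ * ‖T (x n)‖ := le_opNorm _ _
          _ ≤ 1 * 1 := by
              apply mul_le_mul _ (hTxle n) (norm_nonneg _) zero_le_one
              rw [hadj, hT1]
          _ = 1 := one_mul 1
      have e4 : ‖x n‖ ^ 2 ≤ 1 := by nlinarith [norm_nonneg (x n), hx1' n]
      have e5 : ‖ContinuousLinearMap.adjoint T (T (x n))‖ ^ 2 ≤ 1 := by
        nlinarith [norm_nonneg (ContinuousLinearMap.adjoint T (T (x n)))]
      rw [e1, e2]
      linarith
    have hup : Tendsto (fun n => Real.sqrt (2 - 2 * ‖T (x n)‖ ^ 2)) atTop (nhds 0) := by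
      have h2 : Tendsto (fun n => 2 - 2 * ‖T (x n)‖ ^ 2) atTop (nhds 0) := by
        have := ((hTx.mul hTx).const_mul (2:ℝ)).const_sub 2
        simpa [pow_two] using this
      have := (Real.continuous_sqrt.tendsto 0).comp h2
      simpa [Function.comp_def] using this
    apply squeeze_zero (fun n => norm_nonneg _) _ hup
    intro n
    have := Real.sqrt_le_sqrt (hbound n)
    rwa [Real.sqrt_sq (norm_nonneg _)] at this
  -- the sequence x n is weakly null
  have hdense : ∀ w : H, ∀ ε : ℝ, 0 < ε → ∃ v : H, ‖S v - w‖ < ε := by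
    intro w ε hε
    set R : Submodule ℂ H := LinearMap.range (S : H →ₗ[ℂ] H) with hR
    have horth : Rᗮ = ⊥ := by
      rw [Submodule.eq_bot_iff]
      intro v hv
      have h1 : ∀ u : H, ⟪S u, v⟫ = 0 := by
        intro u
        exact (Submodule.mem_orthogonal R v).1 hv (S u) ⟨u, rfl⟩
      have h2 : ⟪S v, S v⟫ = 0 := by
        rw [hsym v (S v)]
        rw [← inner_conj_symm]
        rw [h1 (S v)]
        simp
      have h3 : S v = 0 := inner_self_eq_zero.1 h2
      exact hker v h3
    have hcl : R.topologicalClosure = ⊤ := Submodule.topologicalClosure_eq_top_iff.2 horth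
    have hwcl : w ∈ closure (R : Set H) := by
      have : w ∈ R.topologicalClosure := by rw [hcl]; trivial
      exact this
    obtain ⟨u, huR, hud⟩ := Metric.mem_closure_iff.1 hwcl ε hε
    obtain ⟨v, rfl⟩ := huR
    exact ⟨v, by rwa [← dist_eq_norm, dist_comm]⟩
  have hweak : ∀ y : H, Tendsto (fun n => ‖(⟪x n, y⟫ : ℂ)‖) atTop (nhds 0) := by
    intro y
    rw [Metric.tendsto_atTop]
    intro ε hε
    obtain ⟨v, hv⟩ := hdense y (ε / 2) (by linarith)
    have hS2 : ∀ᶠ n in atTop, ‖S (x n)‖ < ε / 2 / (‖v‖ + 1) := by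
      have hpos : 0 < ε / 2 / (‖v‖ + 1) := by positivity
      exact (hSx.eventually (eventually_lt_nhds hpos)).mono (fun n hn => by simpa using hn)
    obtain ⟨Nn, hNn⟩ := eventually_atTop.1 hS2
    refine ⟨Nn, fun n hn => ?_⟩
    have b1 : ‖(⟪x n, y⟫ : ℂ)‖ ≤ ‖(⟪x n, y - S v⟫ : ℂ)‖ + ‖(⟪x n, S v⟫ : ℂ)‖ := by
      have : (⟪x n, y⟫ : ℂ) = ⟪x n, y - S v⟫ + ⟪x n, S v⟫ := by
        rw [← inner_add_right]; congr 1; abel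
      rw [this]; exact norm_add_le _ _
    have b2 : ‖(⟪x n, y - S v⟫ : ℂ)‖ ≤ ‖y - S v‖ := by
      calc ‖(⟪x n, y - S v⟫ : ℂ)‖ ≤ ‖x n‖ * ‖y - S v‖ := norm_inner_le_norm _ _
        _ ≤ 1 * ‖y - S v‖ := by
            apply mul_le_mul_of_nonneg_right (hx1' n) (norm_nonneg _)
        _ = ‖y - S v‖ := one_mul _
    have b3 : ‖(⟪x n, S v⟫ : ℂ)‖ ≤ ‖S (x n)‖ * ‖v‖ := by
      rw [← hsym]
      exact norm_inner_le_norm _ _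
    have b4 : ‖S (x n)‖ * ‖v‖ < ε / 2 := by
      have h5 := hNn n hn
      have h6 : (0:ℝ) ≤ ‖v‖ := norm_nonneg v
      have h7 : ‖S (x n)‖ * ‖v‖ ≤ ‖S (x n)‖ * (‖v‖ + 1) := by
        apply mul_le_mul_of_nonneg_left _ (norm_nonneg _)
        linarith
      have h8 : ‖S (x n)‖ * (‖v‖ + 1) < ε / 2 := by
        rw [← lt_div_iff₀ (by positivity : (0:ℝ) < ‖v‖ + 1)]
        exact h5
      linarith
    have b5 : ‖y - S v‖ < ε / 2 := by rwa [← norm_neg, neg_sub] at hv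
    have : ‖(⟪x n, y⟫ : ℂ)‖ < ε := by linarith [b1, b2, b3]
    simpa [Real.dist_eq, abs_of_nonneg (norm_nonneg _)] using this
  -- compact operators send x n to a null sequence
  have hKx : Tendsto (fun n => ‖Kop (x n)‖) atTop (nhds 0) := by
    apply tendsto_of_subseq_tendsto
    intro ns hns
    obtain ⟨C, hCc, hCm⟩ := hKc
    obtain ⟨δ, hδ, hball⟩ := Metric.mem_nhds_iff.1 hCm
    set c : ℂ := ((δ / 2 : ℝ) : ℂ) with hc
    have hcnorm : ‖c‖ = δ / 2 := by
      rw [hc, Complex.norm_real, Real.norm_eq_abs, abs_of_pos (by linarith)]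
    set u : ℕ → H := fun n => Kop (c • x (ns n)) with hu
    have hmem : ∀ n, u n ∈ C := by
      intro n
      apply hball
      rw [Metric.mem_ball, dist_zero_right, norm_smul, hcnorm]
      have := hx1' (ns n)
      nlinarith
    obtain ⟨z, hzC, φ, hφ, hφt⟩ := hCc.tendsto_subseq hmem
    have hz0 : z = 0 := by
      have hinz : ∀ y : H, (⟪z, y⟫ : ℂ) = 0 := by
        intro y
        have ht1 : Tendsto (fun n => (⟪u (φ n), y⟫ : ℂ)) atTop (nhds ⟪z, y⟫) := by
          exact Filter.Tendsto.inner hφt tendsto_const_nhds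
        have ht2 : Tendsto (fun n => (⟪u (φ n), y⟫ : ℂ)) atTop (nhds 0) := by
          rw [tendsto_zero_iff_norm_tendsto_zero]
          have heq : ∀ n, ‖(⟪u (φ n), y⟫ : ℂ)‖
              = ‖c‖ * ‖(⟪x (ns (φ n)), ContinuousLinearMap.adjoint Kop y⟫ : ℂ)‖ := by
            intro n
            rw [hu]
            show ‖(⟪Kop (c • x (ns (φ n))), y⟫ : ℂ)‖ = _
            rw [← ContinuousLinearMap.adjoint_inner_right, inner_smul_left, norm_mul,
              RCLike.norm_conj]
          simp only [heq]
          have hcomp : Tendsto (fun n => ‖(⟪x (ns (φ n)), ContinuousLinearMap.adjoint Kop y⟫ : ℂ)‖)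
              atTop (nhds 0) :=
            (hweak (ContinuousLinearMap.adjoint Kop y)).comp
              ((hns.comp hφ.tendsto_atTop))
          have := hcomp.const_mul ‖c‖
          simpa using this
        exact tendsto_nhds_unique ht1 ht2
      have := hinz z
      exact inner_self_eq_zero.1 this
    refine ⟨φ, ?_⟩
    have hKnorm : ∀ n, ‖Kop (x (ns (φ n)))‖ = (2 / δ) * ‖u (φ n)‖ := by
      intro n
      rw [hu]
      show _ = (2/δ) * ‖Kop (c • x (ns (φ n)))‖
      rw [map_smul, norm_smul, hcnorm]
      field_simp
    have hu0 : Tendsto (fun n => ‖u (φ n)‖) atTop (nhds 0) := by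
      rw [hz0] at hφt
      have := hφt.norm
      simpa using this
    simp only [hKnorm]
    have := hu0.const_mul (2/δ)
    simpa using this
  -- combine
  have hfin : ∀ n : ℕ, 1 - 1 / ((n:ℝ) + 1) ≤ ‖T + Kop‖ + ‖Kop (x n)‖ := by
    intro n
    have e1 : T (x n) = (T + Kop) (x n) - Kop (x n) := by simp
    have e2 : ‖T (x n)‖ ≤ ‖(T + Kop) (x n)‖ + ‖Kop (x n)‖ := by
      rw [e1]; exact norm_sub_le _ _
    have e3 : ‖(T + Kop) (x n)‖ ≤ ‖T + Kop‖ := by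
      calc ‖(T + Kop) (x n)‖ ≤ ‖T + Kop‖ * ‖x n‖ := le_opNorm _ _
        _ ≤ ‖T + Kop‖ * 1 := mul_le_mul_of_nonneg_left (hx1' n) (norm_nonneg _)
        _ = ‖T + Kop‖ := mul_one _
    have := (hx2 n).le
    linarith
  have hlim : (1:ℝ) ≤ ‖T + Kop‖ := by
    have h2 : Tendsto (fun n : ℕ => ‖T + Kop‖ + ‖Kop (x n)‖) atTop (nhds (‖T + Kop‖ + 0)) :=
      tendsto_const_nhds.add hKx
    rw [add_zero] at h2
    exact le_of_tendsto_of_tendsto' hlow h2 hfin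
  linarith

end Ess
section Deutsch

open ContinuousLinearMap

variable {H : Type*} [NormedAddCommGroup H] [InnerProductSpace ℂ H] [CompleteSpace H]
variable (M N : Submodule ℂ H)

lemma closed_of_norm_TT_lt [Submodule.HasOrthogonalProjection M] [Submodule.HasOrthogonalProjection N]
    [Submodule.HasOrthogonalProjection (M ⊓ N)]
    (hM : IsClosed (M : Set H)) (hN : IsClosed (N : Set H))
    (h : ‖TT M N‖ < 1) : IsClosed ((M ⊔ N : Submodule ℂ H) : Set H) := by
  set c := ‖TT M N‖ with hc
  have hc0 : 0 ≤ c := norm_nonneg _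
  have key : ∀ b ∈ N, b ∈ (M ⊓ N)ᗮ → ∀ a ∈ M, (1 - c^2) * ‖b‖^2 ≤ ‖a + b‖^2 := by
    intro b hbN hbO a haM
    have h0 : proj (M ⊓ N) b = 0 := proj_eq_zero _ hbO
    have h1 : TT M N b = proj M b := by
      rw [TT_apply, h0, sub_zero, proj_eq_self N hbN]
    have h2 : ‖proj M b‖ ≤ c * ‖b‖ := by rw [← h1]; exact le_opNorm _ _
    have h3 : ‖b - proj M b‖ ≤ ‖a + b‖ := by
      have := proj_min M b (Submodule.neg_mem M haM)
      rwa [sub_neg_eq_add, add_comm] at this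
    have h4 := norm_sq_proj M b
    nlinarith [norm_nonneg (a + b), norm_nonneg (proj M b), norm_nonneg b,
      norm_nonneg (b - proj M b)]
  apply IsSeqClosed.isClosed
  intro z p hzmem hzt
  have hdecomp : ∀ k, ∃ a ∈ M, ∃ b ∈ N, a + b = z k := fun k => Submodule.mem_sup.1 (hzmem k)
  choose a ha b hb hab using hdecomp
  set b' : ℕ → H := fun k => b k - proj (M ⊓ N) (b k) with hb'
  have hb'N : ∀ k, b' k ∈ N := fun k =>
    Submodule.sub_mem N (hb k) (Submodule.mem_inf.1 (proj_apply_mem (M ⊓ N) (b k))).2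
  have hb'O : ∀ k, b' k ∈ (M ⊓ N)ᗮ := fun k => sub_proj_mem_orth _ _
  set a' : ℕ → H := fun k => z k - b' k with ha'
  have ha'M : ∀ k, a' k ∈ M := by
    intro k
    have heq : a' k = a k + proj (M ⊓ N) (b k) := by
      simp only [ha', hb', ← hab k]; abel
    rw [heq]
    exact Submodule.add_mem M (ha k) (Submodule.mem_inf.1 (proj_apply_mem _ _)).1
  have hsq : 0 < 1 - c^2 := by nlinarith
  have hCauchy : CauchySeq b' := by
    rw [Metric.cauchySeq_iff]
    have hzc : CauchySeq z := hzt.cauchySeq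
    rw [Metric.cauchySeq_iff] at hzc
    intro ε hε
    obtain ⟨Nk, hNk⟩ := hzc (ε * Real.sqrt (1 - c^2)) (by positivity)
    refine ⟨Nk, fun m hm n hn => ?_⟩
    have hd := hNk m hm n hn
    have hkey := key (b' m - b' n) (Submodule.sub_mem N (hb'N m) (hb'N n))
      (Submodule.sub_mem _ (hb'O m) (hb'O n)) (a' m - a' n)
      (Submodule.sub_mem M (ha'M m) (ha'M n))
    have heq : (a' m - a' n) + (b' m - b' n) = z m - z n := by
      simp only [ha']; abel
    rw [heq] at hkey
    rw [dist_eq_norm] at hd ⊢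
    have h5 : ‖z m - z n‖^2 < (ε * Real.sqrt (1 - c^2))^2 := by
      nlinarith [norm_nonneg (z m - z n), Real.sqrt_nonneg (1 - c^2),
        Real.sqrt_pos.2 hsq]
    have h6 : (ε * Real.sqrt (1 - c^2))^2 = ε^2 * (1 - c^2) := by
      rw [mul_pow, Real.sq_sqrt hsq.le]
    have h7 : ‖b' m - b' n‖^2 < ε^2 := by nlinarith [hkey, h5, h6, hsq]
    exact lt_of_pow_lt_pow_left₀ 2 hε.le h7
  obtain ⟨bl, hbl⟩ := cauchySeq_tendsto_of_complete hCauchy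
  have hblN : bl ∈ N := hN.mem_of_tendsto hbl (Filter.Eventually.of_forall hb'N)
  have halt : Tendsto a' atTop (nhds (p - bl)) := hzt.sub hbl
  have halM : p - bl ∈ M := hM.mem_of_tendsto halt (Filter.Eventually.of_forall ha'M)
  have hp : p = (p - bl) + bl := by abel
  show p ∈ (M ⊔ N : Submodule ℂ H)
  rw [hp]
  exact Submodule.add_mem _ (Submodule.mem_sup_left halM) (Submodule.mem_sup_right hblN)

set_option maxHeartbeats 2000000 in
lemma norm_TT_lt_of_closed [Submodule.HasOrthogonalProjection M] [Submodule.HasOrthogonalProjection N]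
    [Submodule.HasOrthogonalProjection (M ⊓ N)]
    (hM : IsClosed (M : Set H)) (hN : IsClosed (N : Set H))
    (hcl : IsClosed ((M ⊔ N : Submodule ℂ H) : Set H)) : ‖TT M N‖ < 1 := by
  haveI : CompleteSpace M := hM.completeSpace_coe
  set N' : Submodule ℂ H := N ⊓ (M ⊓ N)ᗮ with hN'
  have hN'cl : IsClosed (N' : Set H) := by
    rw [hN', Submodule.coe_inf]
    exact hN.inter (Submodule.isClosed_orthogonal _)
  haveI : CompleteSpace N' := hN'cl.completeSpace_coe
  haveI : CompleteSpace (M ⊔ N : Submodule ℂ H) := hcl.completeSpace_coe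
  set L : M × N' →L[ℂ] H := (M.subtypeL).coprod (N'.subtypeL) with hL
  have hLapp : ∀ u : M × N', L u = (u.1 : H) + (u.2 : H) := fun u => rfl
  have hmemL : ∀ u : M × N', L u ∈ (M ⊔ N : Submodule ℂ H) := by
    intro u
    rw [hLapp]
    exact Submodule.add_mem _ (Submodule.mem_sup_left u.1.2)
      (Submodule.mem_sup_right (Submodule.mem_inf.1 u.2.2).1)
  set L' := L.codRestrict (M ⊔ N) hmemL with hL'
  have hker : LinearMap.ker (L' : M × N' →ₗ[ℂ] ↥(M ⊔ N)) = ⊥ := by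
    rw [ContinuousLinearMap.ker_codRestrict, Submodule.eq_bot_iff]
    rintro u hu
    have h1 : (u.1 : H) + (u.2 : H) = 0 := LinearMap.mem_ker.1 hu
    have h2 : (u.2 : H) ∈ M := by
      have heq : (u.2 : H) = -(u.1 : H) := eq_neg_of_add_eq_zero_right h1
      rw [heq]; exact Submodule.neg_mem M u.1.2
    have h3 : (u.2 : H) ∈ M ⊓ N :=
      Submodule.mem_inf.2 ⟨h2, (Submodule.mem_inf.1 u.2.2).1⟩
    have h4 : (u.2 : H) = 0 :=
      Submodule.disjoint_def.1 (Submodule.orthogonal_disjoint (M ⊓ N)) _ h3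
        (Submodule.mem_inf.1 u.2.2).2
    have h5 : (u.1 : H) = 0 := by
      have := h1; rw [h4, add_zero] at this; exact this
    exact Prod.ext (Subtype.ext h5) (Subtype.ext h4)
  have hMN' : M ⊔ N' = M ⊔ N := by
    apply le_antisymm
    · exact sup_le le_sup_left ((inf_le_left : N' ≤ N).trans le_sup_right)
    · apply sup_le le_sup_left
      intro n hn
      have h1 : proj (M ⊓ N) n ∈ M ⊓ N := proj_apply_mem _ _
      have h2 : n - proj (M ⊓ N) n ∈ N' :=
        Submodule.mem_inf.2 ⟨Submodule.sub_mem N hn (Submodule.mem_inf.1 h1).2,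
          sub_proj_mem_orth _ _⟩
      have heq : n = proj (M ⊓ N) n + (n - proj (M ⊓ N) n) := by abel
      rw [heq]
      exact Submodule.add_mem _ (Submodule.mem_sup_left (Submodule.mem_inf.1 h1).1)
        (Submodule.mem_sup_right h2)
  have hrange : LinearMap.range (L' : M × N' →ₗ[ℂ] ↥(M ⊔ N)) = ⊤ := by
    rw [LinearMap.range_eq_top]
    rintro ⟨w, hw⟩
    rw [← hMN'] at hw
    obtain ⟨av, havM, bv, hbvN', habv⟩ := Submodule.mem_sup.1 hw
    refine ⟨(⟨av, havM⟩, ⟨bv, hbvN'⟩), ?_⟩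
    apply Subtype.ext
    show L _ = w
    rw [hLapp]
    exact habv
  have hexC : ∃ C : ℝ, 1 ≤ C ∧ ∀ a ∈ M, ∀ b ∈ N', ‖b‖ ≤ C * ‖a + b‖ := by
    set e := ContinuousLinearEquiv.ofBijective L' hker hrange with he
    refine ⟨max ‖(e.symm : (M ⊔ N : Submodule ℂ H) →L[ℂ] M × N')‖ 1, le_max_right _ _, ?_⟩
    set C : ℝ := max ‖(e.symm : (M ⊔ N : Submodule ℂ H) →L[ℂ] M × N')‖ 1 with hC
    intro a haM b hbN'
    set u : M × N' := (⟨a, haM⟩, ⟨b, hbN'⟩) with hu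
    have hmem : a + b ∈ (M ⊔ N : Submodule ℂ H) := by
      have := hmemL u
      rwa [hLapp] at this
    have heapp : e u = ⟨a + b, hmem⟩ := by
      apply Subtype.ext
      show L u = a + b
      rw [hLapp]
    have h1 : ‖b‖ ≤ ‖u‖ := norm_snd_le u
    have h3 : ‖u‖ ≤ ‖(e.symm : (M ⊔ N : Submodule ℂ H) →L[ℂ] M × N')‖ * ‖e u‖ := by
      calc ‖u‖ = ‖e.symm (e u)‖ := by rw [e.symm_apply_apply]
        _ ≤ _ := by
          simpa using
            (e.symm : (M ⊔ N : Submodule ℂ H) →L[ℂ] M × N').le_opNorm (e u)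
    have h4 : ‖e u‖ = ‖a + b‖ := by rw [heapp]; rfl
    have h5 : ‖(e.symm : (M ⊔ N : Submodule ℂ H) →L[ℂ] M × N')‖ * ‖e u‖ ≤ C * ‖a + b‖ := by
      rw [h4]
      exact mul_le_mul_of_nonneg_right (le_max_left _ _) (norm_nonneg _)
    linarith
  obtain ⟨C, hC1, hbound⟩ := hexC
  have hCpos : (0:ℝ) < C := lt_of_lt_of_le one_pos hC1
  have h6C : (0:ℝ) ≤ 1 - 1/C^2 := by
    have : 1/C^2 ≤ 1 := by
      rw [div_le_one (by positivity)]
      nlinarith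
    linarith
  have hproj : ∀ b ∈ N', ‖proj M b‖ ≤ Real.sqrt (1 - 1/C^2) * ‖b‖ := by
    intro b hbN'
    have h1 : ‖b‖ ≤ C * ‖b - proj M b‖ := by
      have := hbound (-(proj M b)) (Submodule.neg_mem M (proj_apply_mem M b)) b hbN'
      rwa [neg_add_eq_sub] at this
    have h4 := norm_sq_proj M b
    have h5 : ‖proj M b‖^2 ≤ (1 - 1/C^2) * ‖b‖^2 := by
      have h2 : ‖b‖^2 ≤ C^2 * ‖b - proj M b‖^2 := by
        nlinarith [norm_nonneg b, norm_nonneg (b - proj M b)]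
      have h3 : (1/C^2) * ‖b‖^2 ≤ ‖b - proj M b‖^2 := by
        rw [div_mul_eq_mul_div, div_le_iff₀ (by positivity)]
        nlinarith
      nlinarith
    calc ‖proj M b‖ = Real.sqrt (‖proj M b‖^2) := (Real.sqrt_sq (norm_nonneg _)).symm
      _ ≤ Real.sqrt ((1 - 1/C^2) * ‖b‖^2) := Real.sqrt_le_sqrt h5
      _ = Real.sqrt (1 - 1/C^2) * ‖b‖ := by
          rw [Real.sqrt_mul h6C, Real.sqrt_sq (norm_nonneg _)]
  have hTb : ‖TT M N‖ ≤ Real.sqrt (1 - 1/C^2) := by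
    apply ContinuousLinearMap.opNorm_le_bound _ (Real.sqrt_nonneg _)
    intro v
    rw [TT_apply]
    set y := v - proj (M ⊓ N) v with hy
    set bb := proj N y with hbb
    have hbbN' : bb ∈ N' := by
      apply Submodule.mem_inf.2
      refine ⟨proj_apply_mem _ _, ?_⟩
      rw [Submodule.mem_orthogonal]
      intro w hw
      have hw' : w ∈ N := (Submodule.mem_inf.1 hw).2
      have heq : (⟪w, bb⟫ : ℂ) = ⟪proj N w, y⟫ := (proj_inner N w y).symm
      rw [heq, proj_eq_self N hw']
      exact (Submodule.mem_orthogonal _ _).1 (sub_proj_mem_orth (M ⊓ N) v) w hw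
    calc ‖proj M bb‖ ≤ Real.sqrt (1 - 1/C^2) * ‖bb‖ := hproj bb hbbN'
      _ ≤ Real.sqrt (1 - 1/C^2) * ‖v‖ := by
          apply mul_le_mul_of_nonneg_left _ (Real.sqrt_nonneg _)
          exact (norm_proj_le _ _).trans (norm_sub_proj_le _ _)
  have hlt1 : Real.sqrt (1 - 1/C^2) < 1 := by
    rw [Real.sqrt_lt' one_pos]
    have : (0:ℝ) < 1/C^2 := by positivity
    nlinarith
  exact lt_of_le_of_lt hTb hlt1

end Deutsch
theorem stmt6 {H : Type*} [NormedAddCommGroup H] [InnerProductSpace ℂ H] [CompleteSpace H]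
    (M N : Submodule ℂ H) (hM : IsClosed (M : Set H)) (hN : IsClosed (N : Set H)) :
    IsClosed ((M ⊔ N : Submodule ℂ H) : Set H) ↔ essFriedrichs M N < 1 := by
  haveI : CompleteSpace M := hM.completeSpace_coe
  haveI : CompleteSpace N := hN.completeSpace_coe
  have hMNcl : IsClosed ((M ⊓ N : Submodule ℂ H) : Set H) := by
    rw [Submodule.coe_inf]; exact hM.inter hN
  haveI : CompleteSpace (M ⊓ N : Submodule ℂ H) := hMNcl.completeSpace_coe
  constructor
  · intro hcl
    have h1 : ‖TT M N‖ < 1 := norm_TT_lt_of_closed M N hM hN hcl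
    have h2 : essFriedrichs M N ≤ ‖TT M N‖ := by
      have hb : BddBelow (Set.range fun K : {T : H →L[ℂ] H // IsCompactOperator ⇑T} =>
          ‖proj M * proj N - proj (M ⊓ N) + (K : H →L[ℂ] H)‖) := by
        refine ⟨0, ?_⟩
        rintro r ⟨K, rfl⟩
        exact norm_nonneg _
      have h3 := ciInf_le hb
        (⟨0, isCompactOperator_zero⟩ : {T : H →L[ℂ] H // IsCompactOperator ⇑T})
      simpa [essFriedrichs, TT] using h3
    exact lt_of_le_of_lt h2 h1
  · intro h
    exact closed_of_norm_TT_lt M N hM hN (norm_TT_lt_one_of_ess M N h)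
end
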